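/- Let T : E → E be nonexpansive (1-Lipschitz), let X* be the set of fixed points of T, assumed nonempty, and suppose there exists μ > 0 such that ‖T(x) - x‖ ≥ μ·dist(x, X*) for all x ∈ E, where dist(x, X*) = inf_{y ∈ X*} ‖x - y‖. Let β ∈ (0,1), let λ ∈ (0,1) satisfy λ ≤ (μβ/4)/(1 + μβ/4), let x₀ ∈ E with T(x₀) ≠ x₀, and let the sequence (x_k) be defined by x_{k+1} = λ·x₀ + (1-λ)·T(x_k). Then for k = ⌈ln(2/β)/ln(1/(1-λ))⌉ we have ‖T(x_k) - x_k‖ ≤ β·‖T(x₀) - x₀‖. -/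

import Mathlib

set_option maxHeartbeats 800000 in
/-- Linear error reduction under a local error bound: if `T` is nonexpansive
with a nonempty fixed-point set `X⋆` satisfying `‖T x - x‖ ≥ μ dist(x, X⋆)`,
then the fixed-step Halpern iteration with `λ ≤ (μβ/4)/(1 + μβ/4)` reduces the
fixed-point error by a factor β within `⌈ln(2/β)/ln(1/(1-λ))⌉` iterations. -/
theorem fixed_step_halpern_local_error_bound
    {E : Type*} [NormedAddCommGroup E] [NormedSpace ℝ E]
    (T : E → E) (hT : ∀ x y : E, ‖T x - T y‖ ≤ ‖x - y‖)
    (Xs : Set E) (hXs : Xs = {y : E | T y = y}) (hne : Xs.Nonempty)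
    (μ : ℝ) (hμ : 0 < μ)
    (herr : ∀ x : E, μ * Metric.infDist x Xs ≤ ‖T x - x‖)
    (β : ℝ) (hβ0 : 0 < β) (hβ1 : β < 1)
    (l : ℝ) (hl0 : 0 < l) (hl1 : l < 1)
    (hl : l ≤ (μ * β / 4) / (1 + μ * β / 4))
    (x₀ : E) (hx₀ : T x₀ ≠ x₀)
    (x : ℕ → E) (hx0 : x 0 = x₀)
    (hx : ∀ k : ℕ, x (k + 1) = l • x₀ + (1 - l) • T (x k)) :
    ∀ k : ℕ,
      k = ⌈Real.log (2 / β) / Real.log (1 / (1 - l))⌉₊ →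
      ‖T (x k) - x k‖ ≤ β * ‖T x₀ - x₀‖ := by
  intro k hk
  set r₀ := ‖T x₀ - x₀‖ with hr₀
  have hr₀nn : 0 ≤ r₀ := norm_nonneg _
  have h1l : 0 < 1 - l := by linarith
  -- distances to fixed points do not increase
  have hA : ∀ y ∈ Xs, ∀ n, ‖x n - y‖ ≤ ‖x₀ - y‖ := by
    intro y hy n
    induction n with
    | zero => rw [hx0]
    | succ n ih =>
      have hTy : T y = y := by rw [hXs] at hy; exact hy
      have heq : x (n+1) - y = l • (x₀ - y) + (1 - l) • (T (x n) - T y) := by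
        rw [hx n, hTy]; module
      calc ‖x (n+1) - y‖ = ‖l • (x₀ - y) + (1 - l) • (T (x n) - T y)‖ := by rw [heq]
        _ ≤ ‖l • (x₀ - y)‖ + ‖(1 - l) • (T (x n) - T y)‖ := norm_add_le _ _
        _ = l * ‖x₀ - y‖ + (1 - l) * ‖T (x n) - T y‖ := by
              rw [norm_smul, norm_smul, Real.norm_eq_abs, Real.norm_eq_abs,
                abs_of_pos hl0, abs_of_pos h1l]
        _ ≤ l * ‖x₀ - y‖ + (1 - l) * ‖x n - y‖ := by
              have := hT (x n) y; nlinarith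
        _ ≤ ‖x₀ - y‖ := by nlinarith
  -- successive differences contract
  have hB : ∀ n, ‖x (n+1) - x n‖ ≤ (1-l)^(n+1) * r₀ := by
    intro n
    induction n with
    | zero =>
      have heq : x 1 - x 0 = (1 - l) • (T x₀ - x₀) := by rw [hx 0, hx0]; module
      rw [heq, norm_smul, Real.norm_eq_abs, abs_of_pos h1l, pow_one]
    | succ n ih =>
      have heq : x (n+2) - x (n+1) = (1 - l) • (T (x (n+1)) - T (x n)) := by
        rw [hx (n+1), hx n]; module
      calc ‖x (n+2) - x (n+1)‖ = (1-l) * ‖T (x (n+1)) - T (x n)‖ := by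
            rw [heq, norm_smul, Real.norm_eq_abs, abs_of_pos h1l]
        _ ≤ (1-l) * ‖x (n+1) - x n‖ := by
            have := hT (x (n+1)) (x n); nlinarith
        _ ≤ (1-l) * ((1-l)^(n+1) * r₀) := by nlinarith
        _ = (1-l)^(n+2) * r₀ := by ring
  -- residual bound via the update identity
  have hC : (1 - l) * ‖T (x k) - x k‖ ≤ ‖x (k+1) - x k‖ + l * ‖x₀ - x k‖ := by
    have heq : (1 - l) • (T (x k) - x k) = (x (k+1) - x k) + (-l) • (x₀ - x k) := by
      rw [hx k]; module
    calc (1-l) * ‖T (x k) - x k‖ = ‖(1-l) • (T (x k) - x k)‖ := by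
          rw [norm_smul, Real.norm_eq_abs, abs_of_pos h1l]
      _ ≤ ‖x (k+1) - x k‖ + ‖(-l) • (x₀ - x k)‖ := by rw [heq]; exact norm_add_le _ _
      _ = ‖x (k+1) - x k‖ + l * ‖x₀ - x k‖ := by
          rw [norm_smul, Real.norm_eq_abs, abs_neg, abs_of_pos hl0]
  -- geometric decay bound
  have hlog1 : 0 < Real.log (1/(1-l)) := by
    apply Real.log_pos
    rw [lt_div_iff₀ h1l]; linarith
  have hk' : Real.log (2/β) / Real.log (1/(1-l)) ≤ (k : ℝ) := by
    rw [hk]; exact Nat.le_ceil _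
  have h2β : Real.log (2/β) ≤ (k : ℝ) * Real.log (1/(1-l)) := by
    rw [div_le_iff₀ hlog1] at hk'; exact hk'
  have e1 : Real.log (1/(1-l)) = -Real.log (1-l) := by rw [one_div, Real.log_inv]
  have e2 : Real.log (2/β) = -Real.log (β/2) := by
    rw [show (2:ℝ)/β = (β/2)⁻¹ from (inv_div β 2).symm, Real.log_inv]
  have hb2 : (0:ℝ) < β/2 := by linarith
  have hpow : (1-l)^k ≤ β/2 := by
    have hkl : (k : ℝ) * Real.log (1-l) ≤ Real.log (β/2) := by
      rw [e1, e2] at h2β; nlinarith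
    calc (1-l)^k = Real.exp ((k:ℝ) * Real.log (1-l)) := by
          rw [Real.exp_nat_mul, Real.exp_log h1l]
      _ ≤ Real.exp (Real.log (β/2)) := Real.exp_le_exp.mpr hkl
      _ = β/2 := Real.exp_log hb2
  -- step-size bound
  have hden : (0:ℝ) < 1 + μ*β/4 := by nlinarith [mul_pos hμ hβ0]
  have hlb : l ≤ (1-l) * (μ*β/4) := by
    have := (le_div_iff₀ hden).mp hl; nlinarith
  -- error bound at x₀
  have hdnn : 0 ≤ Metric.infDist x₀ Xs := Metric.infDist_nonneg
  have hdr : μ * Metric.infDist x₀ Xs ≤ r₀ := herr x₀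
  have h3 : (1-l)^(k+1) * r₀ ≤ (1-l)*(β/2)*r₀ := by
    have h := mul_le_mul_of_nonneg_right hpow (mul_nonneg h1l.le hr₀nn)
    calc (1-l)^(k+1) * r₀ = (1-l)^k * ((1-l)*r₀) := by ring
      _ ≤ β/2 * ((1-l)*r₀) := h
      _ = (1-l)*(β/2)*r₀ := by ring
  have h4a : 2*l*(Metric.infDist x₀ Xs) ≤ (1-l)*(β/2)*r₀ := by
    nlinarith [mul_le_mul_of_nonneg_left hdr hl0.le,
      mul_le_mul_of_nonneg_right hlb hr₀nn]
  -- final estimate, up to ε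
  rw [← mul_le_mul_iff_right₀ h1l]
  apply le_of_forall_pos_le_add
  intro ε hε
  have hεl : (0:ℝ) < ε/(2*l) := by positivity
  obtain ⟨y, hy, hdy⟩ := (Metric.infDist_lt_iff hne).mp
    (lt_add_of_pos_right (Metric.infDist x₀ Xs) hεl)
  have hxy : ‖x₀ - y‖ < Metric.infDist x₀ Xs + ε/(2*l) := by
    rw [← dist_eq_norm]; exact hdy
  have hxknx : ‖x₀ - x k‖ ≤ 2 * ‖x₀ - y‖ := by
    have h5 := hA y hy k
    have h6 : dist x₀ (x k) ≤ dist x₀ y + dist y (x k) := dist_triangle _ _ _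
    simp only [dist_eq_norm] at h6
    have h7 : ‖y - x k‖ = ‖x k - y‖ := norm_sub_rev _ _
    linarith
  have hid : l*(2*(Metric.infDist x₀ Xs + ε/(2*l))) = 2*l*(Metric.infDist x₀ Xs) + ε := by
    field_simp
  have h4 : l * ‖x₀ - x k‖ ≤ (1-l)*(β/2)*r₀ + ε := by
    calc l * ‖x₀ - x k‖ ≤ l * (2*‖x₀-y‖) := by
          exact mul_le_mul_of_nonneg_left hxknx hl0.le
      _ ≤ l*(2*(Metric.infDist x₀ Xs + ε/(2*l))) := by nlinarith [hxy, hl0]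
      _ = 2*l*(Metric.infDist x₀ Xs) + ε := hid
      _ ≤ (1-l)*(β/2)*r₀ + ε := by linarith
  have hBk := hB k
  calc (1-l) * ‖T (x k) - x k‖ ≤ ‖x (k+1) - x k‖ + l * ‖x₀ - x k‖ := hC
    _ ≤ (1-l)^(k+1)*r₀ + ((1-l)*(β/2)*r₀ + ε) := by linarith
    _ ≤ (1-l)*(β/2)*r₀ + ((1-l)*(β/2)*r₀ + ε) := by linarith
    _ = (1-l) * (β * r₀) + ε := by ring
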